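/- Let G be a countable group acting by measure-class-preserving transformations on a standard probability space (X,m), and let A be a G-invariant measurable set such that there exists a measurable map π : A → A constant on G-orbits with π(x) ∈ Gx a.e. Then a.e. ergodic component of the action contained in A is purely atomic; equivalently, a.e. orbit in A carries a finite orbit measure μ_x with μ_x(gx) = d(g^{-1}m)/dm(x) and Σ_{g∈G} μ_x(gx)/|Stab| < ∞ when the action is free. -/

import Mathlib

open MeasureTheory
open scoped ENNReal

/-- In a standard Borel space, the fixed-point set of a measurable map is measurable. -/
lemma measurableSet_fixedPoints {X : Type*} [MeasurableSpace X] [StandardBorelSpace X]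
    {π : X → X} (hπ : Measurable π) : MeasurableSet {x : X | π x = x} := by
  letI := upgradeStandardBorel X
  have hdiag : MeasurableSet (Set.diagonal X) := isClosed_diagonal.measurableSet
  exact (hπ.prodMk measurable_id) hdiag

/-- If a `G`-invariant set `A` admits a measurable orbit selection, then (for a free
measure-class-preserving action) a.e. ergodic component in `A` is purely atomic; in
particular, for a.e. `x ∈ A` the orbitwise sum of the Radon–Nikodym derivatives is
finite. -/
theorem stmt_13 {G X : Type*} [Group G] [Countable G] [MeasurableSpace X]
    [StandardBorelSpace X] [MulAction G X]
    (μ : Measure X) [IsProbabilityMeasure μ]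
    (hmeas : ∀ g : G, Measurable (fun x : X => g • x))
    (hfree : ∀ᵐ x ∂μ, ∀ g : G, g • x = x → g = 1)
    (r : G → X → ℝ≥0∞) (hr : ∀ g : G, Measurable (r g))
    (hrn : ∀ g : G, μ.map (fun x : X => g • x) = μ.withDensity (r g))
    (A : Set X) (hA : MeasurableSet A)
    (hAinv : ∀ g : G, (fun x : X => g • x) '' A = A)
    (π : X → X) (hπ : Measurable π)
    (hconst : ∀ g : G, ∀ᵐ x ∂μ, x ∈ A → π (g • x) = π x)
    (hsel : ∀ᵐ x ∂μ, x ∈ A → π x ∈ MulAction.orbit G x) :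
    ∀ᵐ x ∂μ, x ∈ A → (∑' g : G, r g x) ≠ ⊤ := by
  classical
  set F : X → ℝ≥0∞ := fun x => ∑' g : G, r g x with hF
  have hFmeas : Measurable F := Measurable.ennreal_tsum fun g => hr g
  -- measure of preimages via densities
  have hpre : ∀ (g : G) (E : Set X), MeasurableSet E →
      μ ((fun x => g • x) ⁻¹' E) = ∫⁻ x in E, r g x ∂μ := by
    intro g E hE
    rw [← Measure.map_apply (hmeas g) hE, hrn g, withDensity_apply _ hE]
  -- total mass of each density is 1
  have hint : ∀ g : G, ∫⁻ x, r g x ∂μ = 1 := by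
    intro g
    have h := hpre g Set.univ MeasurableSet.univ
    simpa using h.symm
  have hfin : ∀ g : G, ∀ᵐ x ∂μ, r g x < ⊤ := fun g =>
    ae_lt_top (hr g) (by rw [hint g]; exact ENNReal.one_ne_top)
  -- null sets are preserved under the action
  have hnull : ∀ (g : G) (N : Set X), μ N = 0 → μ ((fun x => g • x) ⁻¹' N) = 0 := by
    intro g N hN
    obtain ⟨N', hNN', hN'm, hN'0⟩ := exists_measurable_superset_of_null hN
    refine measure_mono_null (Set.preimage_mono hNN') ?_
    rw [hpre g N' hN'm]
    exact setLIntegral_measure_zero _ _ hN'0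
  -- preimage of A under the action is A
  have hApre : ∀ g : G, (fun x : X => g • x) ⁻¹' A = A := by
    intro g
    ext x
    constructor
    · intro hx
      have h2 : g⁻¹ • (g • x) ∈ (fun y : X => g⁻¹ • y) '' A := ⟨g • x, hx, rfl⟩
      simpa [hAinv g⁻¹] using h2
    · intro hx
      have h2 : g • x ∈ (fun y : X => g • y) '' A := ⟨x, hx, rfl⟩
      simpa [hAinv g] using h2
  -- the cocycle identity
  have hcoc : ∀ a b : G, ∀ᵐ x ∂μ, r (a * b) x = r a x * r b (a⁻¹ • x) := by
    intro a b
    have hrb' : Measurable fun x : X => r b (a⁻¹ • x) := (hr b).comp (hmeas a⁻¹)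
    have h1 : μ.withDensity (r (a * b)) =
        μ.withDensity (fun x => r a x * r b (a⁻¹ • x)) := by
      rw [← hrn (a * b)]
      ext E hE
      rw [Measure.map_apply (hmeas (a * b)) hE, withDensity_apply _ hE]
      have hsplit : (fun x : X => (a * b) • x) ⁻¹' E
          = (fun x : X => b • x) ⁻¹' ((fun x : X => a • x) ⁻¹' E) := by
        ext x; simp [mul_smul]
      rw [hsplit, hpre b _ ((hmeas a) hE)]
      have h2 : ∫⁻ x in E, r a x * r b (a⁻¹ • x) ∂μ
          = ∫⁻ x in E, (fun y => r b (a⁻¹ • y)) x ∂μ.withDensity (r a) := by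
        rw [setLIntegral_withDensity_eq_setLIntegral_mul μ (hr a) hrb' hE]
        rfl
      rw [h2, ← hrn a, setLIntegral_map hE hrb' (hmeas a)]
      congr 1
      ext x
      simp
    exact (withDensity_eq_iff (hr (a * b)).aemeasurable
      ((hr a).mul hrb').aemeasurable (by rw [hint]; exact ENNReal.one_ne_top)).mp h1
  -- the "good" full-measure set of pointwise properties
  have hgood : ∀ᵐ x ∂μ, (∀ g : G, x ∈ A → π (g • x) = π x)
      ∧ (x ∈ A → π x ∈ MulAction.orbit G x)
      ∧ (∀ g : G, g • x = x → g = 1)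
      ∧ (∀ a b : G, r (a * b) x = r a x * r b (a⁻¹ • x))
      ∧ (∀ g : G, r g x < ⊤) := by
    refine ((ae_all_iff.2 hconst).and (hsel.and (hfree.and
      ((ae_all_iff.2 fun a => ae_all_iff.2 (hcoc a)).and (ae_all_iff.2 hfin))))).mono ?_
    tauto
  -- the set of selected points
  set C : Set X := A ∩ {x | π x = x} with hC
  have hCmeas : MeasurableSet C := hA.inter (measurableSet_fixedPoints hπ)
  -- good points of A are mapped by π into C
  have hπC : ∀ x : X, (∀ g : G, x ∈ A → π (g • x) = π x) →
      (x ∈ A → π x ∈ MulAction.orbit G x) → x ∈ A → π x ∈ C := by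
    intro x h1 h2 hxA
    obtain ⟨h, hh⟩ := h2 hxA
    have hh' : h • x = π x := hh
    have hπA : π x ∈ A := by
      rw [← hh', ← hAinv h]
      exact ⟨x, hxA, rfl⟩
    refine ⟨hπA, ?_⟩
    show π (π x) = π x
    calc π (π x) = π (h • x) := by rw [hh']
      _ = π x := h1 h hxA
  -- bad set for the good properties
  obtain ⟨B, hBsub, hBmeas, hB0⟩ := exists_measurable_superset_of_null (ae_iff.mp hgood)
  -- key finiteness: the integral of F over C is at most 1
  have hCkey : ∫⁻ x in C, F x ∂μ ≤ 1 := by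
    have h1 : ∫⁻ x in C, F x ∂μ = ∑' g : G, ∫⁻ x in C, r g x ∂μ :=
      lintegral_tsum fun g => (hr g).aemeasurable
    have h2 : ∀ g : G, ∫⁻ x in C, r g x ∂μ = μ (((fun x : X => g • x) ⁻¹' C) \ B) := by
      intro g
      rw [← hpre g C hCmeas]
      exact (measure_diff_null hB0).symm
    have hdisj : Pairwise (Function.onFun Disjoint
        fun g : G => ((fun x : X => g • x) ⁻¹' C) \ B) := by
      intro g g' hgg'
      simp only [Function.onFun, Set.disjoint_left]
      rintro x ⟨hxg, hxB⟩ ⟨hxg', _⟩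
      have hxgood : (∀ g : G, x ∈ A → π (g • x) = π x)
          ∧ (x ∈ A → π x ∈ MulAction.orbit G x)
          ∧ (∀ g : G, g • x = x → g = 1)
          ∧ (∀ a b : G, r (a * b) x = r a x * r b (a⁻¹ • x))
          ∧ (∀ g : G, r g x < ⊤) := by
        by_contra hcon
        exact hxB (hBsub hcon)
      have hxA : x ∈ A := by
        rw [← hApre g]
        exact hxg.1
      have hxg2 : π (g • x) = g • x := hxg.2
      have hxg2' : π (g' • x) = g' • x := hxg'.2
      have heg : g • x = π x := hxg2.symm.trans (hxgood.1 g hxA)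
      have heg' : g' • x = π x := hxg2'.symm.trans (hxgood.1 g' hxA)
      have hfix : (g'⁻¹ * g) • x = x := by
        rw [mul_smul, heg, ← heg', inv_smul_smul]
      have h1 := hxgood.2.2.1 _ hfix
      exact hgg' (inv_mul_eq_one.mp h1).symm
    calc ∫⁻ x in C, F x ∂μ
        = ∑' g : G, μ (((fun x : X => g • x) ⁻¹' C) \ B) := by
          rw [h1]; exact tsum_congr h2
      _ = μ (⋃ g : G, ((fun x : X => g • x) ⁻¹' C) \ B) :=
          (measure_iUnion hdisj fun g => ((hmeas g) hCmeas).diff hBmeas).symm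
      _ ≤ 1 := prob_le_one
  -- the null set where F is infinite on C
  set N : Set X := F ⁻¹' {⊤} ∩ C with hNdef
  have hN0 : μ N = 0 := by
    have hae : ∀ᵐ x ∂μ.restrict C, F x < ⊤ :=
      ae_lt_top hFmeas (lt_of_le_of_lt hCkey ENNReal.one_lt_top).ne
    have h0 := ae_iff.mp hae
    have hset : {x | ¬ F x < ⊤} = F ⁻¹' {⊤} := by
      ext x
      simp [lt_top_iff_ne_top]
    rw [hset, Measure.restrict_apply (hFmeas (measurableSet_singleton ⊤))] at h0
    exact h0
  have hbigN : μ (⋃ h : G, (fun x : X => h • x) ⁻¹' N) = 0 :=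
    measure_iUnion_null fun h => hnull h N hN0
  have hNae : ∀ᵐ x ∂μ, x ∉ ⋃ h : G, (fun y : X => h • y) ⁻¹' N := by
    rw [ae_iff]
    have hset : {x | ¬ x ∉ ⋃ h : G, (fun y : X => h • y) ⁻¹' N}
        = ⋃ h : G, (fun y : X => h • y) ⁻¹' N := by
      ext x; simp
    rw [hset]
    exact hbigN
  -- conclusion
  filter_upwards [hgood, hNae] with x hx hxN hxA
  obtain ⟨hcst, hselx, hfr, hcocx, hfinx⟩ := hx
  obtain ⟨h, hh⟩ := hselx hxA
  have hh' : h • x = π x := hh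
  have hπxC : π x ∈ C := hπC x hcst hselx hxA
  have hFπ : F (π x) ≠ ⊤ := by
    intro htop
    apply hxN
    refine Set.mem_iUnion.2 ⟨h, ?_⟩
    show h • x ∈ N
    rw [hh']
    exact ⟨htop, hπxC⟩
  have hkey : ∀ g : G, r g x = r h⁻¹ x * r (h * g) (π x) := by
    intro g
    have hc := hcocx h⁻¹ (h * g)
    rw [inv_mul_cancel_left] at hc
    rw [hc, inv_inv, hh']
  have hsum : F x = r h⁻¹ x * F (π x) := by
    calc F x = ∑' g : G, r h⁻¹ x * r (h * g) (π x) := tsum_congr hkey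
      _ = r h⁻¹ x * ∑' g : G, r (h * g) (π x) := ENNReal.tsum_mul_left
      _ = r h⁻¹ x * F (π x) := by
          congr 1
          exact (Equiv.mulLeft h).tsum_eq fun k => r k (π x)
  show F x ≠ ⊤
  rw [hsum]
  exact ENNReal.mul_ne_top (hfinx h⁻¹).ne hFπ
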